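/- arXiv:2512.20576 — 2 statements merged into one kernel-verified Lean document; each statement's English description precedes it below -/
import Mathlib

section
/- For the softmax policy π_θ(·|s) on a finite action set A, and any unit vector u, the sum over actions of the absolute value of the second directional derivative satisfies Σ_{a∈A} |d²/dα² π_{θ+αu}(a|s)|_{α=0}| ≤ 6. -/
/-- The softmax policy `π_θ(a|s) = exp(θ_{s,a}) / Σ_{a'} exp(θ_{s,a'})`. -/
noncomputable def softmaxPolicy {S A : Type*} [Fintype A]
    (θ : S × A → ℝ) (s : S) (a : A) : ℝ :=
  Real.exp (θ (s, a)) / ∑ a' : A, Real.exp (θ (s, a'))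

/-- For the softmax policy on a finite action set and any unit
direction `u`, the sum over actions of the absolute value of the second
directional derivative satisfies `Σ_{a∈A} |d²/dα² π_{θ+αu}(a|s)|_{α=0}| ≤ 6`. -/
theorem softmax_second_directional_deriv_sum_le_six
    {S A : Type*} [Fintype S] [Fintype A]
    (θ u : S × A → ℝ)
    (hu : Real.sqrt (∑ p : S × A, (u p) ^ 2) = 1)
    (s : S) :
    ∑ a : A,
      |deriv (deriv (fun α : ℝ => softmaxPolicy (θ + α • u) s a)) 0| ≤ 6 := by
  classical
  rcases isEmpty_or_nonempty A with hA | hA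
  · simp
  have hsq : (∑ p : S × A, (u p) ^ 2) = 1 := by
    have h0 : (0:ℝ) ≤ ∑ p : S × A, (u p) ^ 2 :=
      Finset.sum_nonneg fun p _ => sq_nonneg _
    nlinarith [Real.sq_sqrt h0, hu]
  have hu1 : ∀ p : S × A, |u p| ≤ 1 := by
    intro p
    have h1 : (u p) ^ 2 ≤ 1 := by
      rw [← hsq]
      exact Finset.single_le_sum (fun q _ => sq_nonneg (u q)) (Finset.mem_univ p)
    nlinarith [sq_abs (u p), abs_nonneg (u p)]
  set c : A → ℝ := fun a => u (s, a) with hc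
  set f : A → ℝ → ℝ := fun a α => Real.exp (θ (s, a) + α * c a) with hfdef
  set g : ℝ → ℝ := fun α => ∑ b : A, f b α with hgdef
  have hgpos : ∀ α, 0 < g α := fun α =>
    Finset.sum_pos (fun b _ => Real.exp_pos _) Finset.univ_nonempty
  set π : A → ℝ → ℝ := fun a α => f a α / g α with hπdef
  set m : ℝ → ℝ := fun α => ∑ b : A, c b * π b α with hmdef
  -- derivatives of f and g
  have hfd : ∀ a α, HasDerivAt (f a) (c a * f a α) α := by
    intro a α
    have h1 : HasDerivAt (fun α : ℝ => θ (s, a) + α * c a) (c a) α := by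
      simpa using ((hasDerivAt_id α).mul_const (c a)).const_add (θ (s, a))
    simpa [hfdef, mul_comm] using h1.exp
  have hgd : ∀ α, HasDerivAt g (∑ b : A, c b * f b α) α := fun α =>
    HasDerivAt.fun_sum (fun b _ => hfd b α)
  -- derivative of π
  have hπd : ∀ a α, HasDerivAt (π a) (π a α * (c a - m α)) α := by
    intro a α
    have h := (hfd a α).div (hgd α) (ne_of_gt (hgpos α))
    have hmval : m α * g α = ∑ b : A, c b * f b α := by
      rw [hmdef]
      simp only
      rw [Finset.sum_mul]
      refine Finset.sum_congr rfl fun b _ => ?_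
      rw [hπdef]
      field_simp
      exact mul_div_cancel_right₀ _ (ne_of_gt (hgpos α))
    have heq : (c a * f a α * g α - f a α * ∑ b : A, c b * f b α) / g α ^ 2
        = π a α * (c a - m α) := by
      rw [← hmval, hπdef]
      field_simp
    rwa [heq] at h
  -- the softmax function equals π a
  have hsm : ∀ a, (fun α : ℝ => softmaxPolicy (θ + α • u) s a) = π a := by
    intro a
    funext α
    simp only [softmaxPolicy, hπdef, hfdef, hgdef, hc, Pi.add_apply, Pi.smul_apply,
      smul_eq_mul]
  have hderiv1 : ∀ a, deriv (π a) = fun α => π a α * (c a - m α) := by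
    intro a
    funext α
    exact (hπd a α).deriv
  -- derivative of m at 0
  set V : ℝ := ∑ b : A, c b * (π b 0 * (c b - m 0)) with hVdef
  have hmd : HasDerivAt m V 0 := by
    rw [hmdef, hVdef]
    exact HasDerivAt.fun_sum (fun b _ => (hπd b 0).const_mul (c b))
  -- second derivative
  have hsecond : ∀ a,
      deriv (deriv (fun α : ℝ => softmaxPolicy (θ + α • u) s a)) 0
        = π a 0 * (c a - m 0) * (c a - m 0) + π a 0 * (-V) := by
    intro a
    rw [hsm, hderiv1]
    have h2 : HasDerivAt (fun α => π a α * (c a - m α))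
        (π a 0 * (c a - m 0) * (c a - m 0) + π a 0 * (-V)) 0 := by
      have hsub : HasDerivAt (fun α => c a - m α) (-V) 0 := hmd.const_sub (c a)
      exact (hπd a 0).mul hsub
    exact h2.deriv
  -- bounds
  have hπnn : ∀ b, 0 ≤ π b 0 := fun b =>
    le_of_lt (div_pos (Real.exp_pos _) (hgpos 0))
  have hπsum : ∑ b : A, π b 0 = 1 := by
    rw [hπdef]
    simp only
    rw [← Finset.sum_div]
    exact div_self (ne_of_gt (hgpos 0))
  have hcb : ∀ b, |c b| ≤ 1 := fun b => hu1 (s, b)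
  have hm1 : |m 0| ≤ 1 := by
    calc |m 0| ≤ ∑ b : A, |c b * π b 0| := Finset.abs_sum_le_sum_abs _ _
      _ ≤ ∑ b : A, π b 0 := by
          refine Finset.sum_le_sum fun b _ => ?_
          rw [abs_mul, abs_of_nonneg (hπnn b)]
          calc |c b| * π b 0 ≤ 1 * π b 0 :=
                mul_le_mul_of_nonneg_right (hcb b) (hπnn b)
            _ = π b 0 := one_mul _
      _ = 1 := hπsum
  have hcm : ∀ b, |c b - m 0| ≤ 2 := by
    intro b
    calc |c b - m 0| ≤ |c b| + |m 0| := abs_sub _ _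
      _ ≤ 2 := by linarith [hcb b]
  have hV2 : |V| ≤ 2 := by
    calc |V| ≤ ∑ b : A, |c b * (π b 0 * (c b - m 0))| := Finset.abs_sum_le_sum_abs _ _
      _ ≤ ∑ b : A, 2 * π b 0 := by
          refine Finset.sum_le_sum fun b _ => ?_
          rw [abs_mul, abs_mul, abs_of_nonneg (hπnn b)]
          calc |c b| * (π b 0 * |c b - m 0|) ≤ 1 * (π b 0 * 2) := by
                refine mul_le_mul (hcb b) (mul_le_mul_of_nonneg_left (hcm b) (hπnn b))
                  (mul_nonneg (hπnn b) (abs_nonneg _)) zero_le_one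
            _ = 2 * π b 0 := by ring
      _ = 2 := by rw [← Finset.mul_sum, hπsum, mul_one]
  -- final
  calc ∑ a : A, |deriv (deriv (fun α : ℝ => softmaxPolicy (θ + α • u) s a)) 0|
      ≤ ∑ a : A, 6 * π a 0 := by
        refine Finset.sum_le_sum fun a _ => ?_
        rw [hsecond a]
        calc |π a 0 * (c a - m 0) * (c a - m 0) + π a 0 * (-V)|
            ≤ |π a 0 * (c a - m 0) * (c a - m 0)| + |π a 0 * (-V)| := abs_add_le _ _
          _ ≤ 6 * π a 0 := by
              rw [abs_mul, abs_mul, abs_mul, abs_neg, abs_of_nonneg (hπnn a)]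
              have h4 : π a 0 * |c a - m 0| * |c a - m 0| ≤ π a 0 * 2 * 2 := by
                refine mul_le_mul (mul_le_mul_of_nonneg_left (hcm a) (hπnn a)) (hcm a)
                  (abs_nonneg _) (by positivity)
              have h5 : π a 0 * |V| ≤ π a 0 * 2 :=
                mul_le_mul_of_nonneg_left hV2 (hπnn a)
              linarith
    _ = 6 := by rw [← Finset.mul_sum, hπsum, mul_one]
end

section
/- (Performative performance difference) For two policies π and π' in a performative MDP where the reward r_π and transition P_π depend on the deployed policy, the difference of performative value functions satisfies: V_π^π(ρ) - V_{π'}^{π'}(ρ) = (1/(1-γ)) E_{(s,a) ~ d^π_{π',ρ}}[ A^{π'}_{π'}(s,a) + (r_π(s,a) - r_{π'}(s,a)) + γ(P_π(·|s,a) - P_{π'}(·|s,a))^⊤ V^π_π(·) ], where d^π_{π',ρ} is the discounted state-action occupancy of policy π in the environment induced by π', and A^{π'}_{π'}(s,a) = Q^{π'}_{π'}(s,a) - V^{π'}_{π'}(s) is the performative advantage. -/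
/-- Performative performance difference lemma.  In a performative
MDP on finite state and action spaces, where rewards `r_π` and transitions
`P_π` depend on the deployed policy, the difference of performative value
functions satisfies
`V_π^π(ρ) - V_{π'}^{π'}(ρ)
  = (1/(1-γ)) E_{(s,a)~d^π_{π',ρ}}[A^{π'}_{π'}(s,a)
      + (r_π(s,a) - r_{π'}(s,a))
      + γ(P_π(·|s,a) - P_{π'}(·|s,a))^⊤ V^π_π(·)]`.
The value functions are characterized by their Bellman equations, the `Q`- and
advantage functions by their definitions, and the occupancy measure
`d^π_{π',ρ}` (playing `π` in the environment induced by `π'`, starting from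
`ρ`) by its flow equation. -/
theorem performative_performance_difference
    {S A : Type*} [Fintype S] [Fintype A]
    (γ : ℝ) (hγ0 : 0 < γ) (hγ1 : γ < 1)
    (π π' : S → A → ℝ)                    -- the two policies
    (ρ : S → ℝ)                           -- initial state distribution
    (hρ_nonneg : ∀ s, 0 ≤ ρ s) (hρ_sum : ∑ s, ρ s = 1)
    (hπ_nonneg : ∀ s a, 0 ≤ π s a) (hπ_sum : ∀ s, ∑ a, π s a = 1)
    (hπ'_nonneg : ∀ s a, 0 ≤ π' s a) (hπ'_sum : ∀ s, ∑ a, π' s a = 1)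
    (rπ rπ' : S → A → ℝ)                  -- rewards induced by π and π'
    (Pπ Pπ' : S → A → S → ℝ)              -- transitions induced by π and π'
    (Vππ Vπ'π' : S → ℝ) (Qπ'π' : S → A → ℝ) (Adv : S → A → ℝ)
    (dStat : S → ℝ) (d : S → A → ℝ)
    -- Bellman equation for V_π^π (play π in the environment induced by π):
    (hVππ : ∀ s, Vππ s
      = ∑ a, π s a * (rπ s a + γ * ∑ s', Pπ s a s' * Vππ s'))
    -- Bellman equation for V_{π'}^{π'}:
    (hVπ'π' : ∀ s, Vπ'π' s
      = ∑ a, π' s a * (rπ' s a + γ * ∑ s', Pπ' s a s' * Vπ'π' s'))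
    -- Q-function and performative advantage in the environment induced by π':
    (hQ : ∀ s a, Qπ'π' s a = rπ' s a + γ * ∑ s', Pπ' s a s' * Vπ'π' s')
    (hAdv : ∀ s a, Adv s a = Qπ'π' s a - Vπ'π' s)
    -- discounted occupancy of π under transitions P_{π'}, started from ρ:
    (hdStat : ∀ s, dStat s
      = (1 - γ) * ρ s + γ * ∑ s'', ∑ a'', dStat s'' * π s'' a'' * Pπ' s'' a'' s)
    (hd : ∀ s a, d s a = dStat s * π s a) :
    (∑ s, ρ s * Vππ s) - (∑ s, ρ s * Vπ'π' s)
      = (1 / (1 - γ)) *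
          ∑ s, ∑ a, d s a *
            (Adv s a + (rπ s a - rπ' s a)
              + γ * ∑ s', (Pπ s a s' - Pπ' s a s') * Vππ s') := by

  classical
  have hne : (1 - γ) ≠ 0 := by linarith
  set Δ : S → ℝ := fun s => Vππ s - Vπ'π' s with hΔ
  -- rewrite the integrand
  have hinner : ∀ s a,
      d s a * (Adv s a + (rπ s a - rπ' s a)
        + γ * ∑ s', (Pπ s a s' - Pπ' s a s') * Vππ s')
      = dStat s * (π s a * (rπ s a + γ * ∑ s', Pπ s a s' * Vππ s'))
        - dStat s * π s a * Vπ'π' s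
        - γ * ∑ s', dStat s * π s a * Pπ' s a s' * Δ s' := by
    intro s a
    have h1 : ∑ s', (Pπ s a s' - Pπ' s a s') * Vππ s'
        = (∑ s', Pπ s a s' * Vππ s') - ∑ s', Pπ' s a s' * Vππ s' := by
      rw [← Finset.sum_sub_distrib]; exact Finset.sum_congr rfl (fun _ _ => by ring)
    have h2 : ∑ s', dStat s * π s a * Pπ' s a s' * Δ s'
        = dStat s * π s a *
          ((∑ s', Pπ' s a s' * Vππ s') - ∑ s', Pπ' s a s' * Vπ'π' s') := by
      rw [← Finset.sum_sub_distrib, Finset.mul_sum]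
      exact Finset.sum_congr rfl (fun _ _ => by simp [hΔ]; ring)
    rw [hd, hAdv, hQ, h1, h2]; ring
  have hsum : ∑ s, ∑ a, d s a *
      (Adv s a + (rπ s a - rπ' s a)
        + γ * ∑ s', (Pπ s a s' - Pπ' s a s') * Vππ s')
      = (1 - γ) * ∑ s, ρ s * Δ s := by
    calc ∑ s, ∑ a, d s a *
        (Adv s a + (rπ s a - rπ' s a)
          + γ * ∑ s', (Pπ s a s' - Pπ' s a s') * Vππ s')
        = ∑ s, (dStat s * Δ s
            - γ * ∑ a, ∑ s', dStat s * π s a * Pπ' s a s' * Δ s') := by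
          refine Finset.sum_congr rfl (fun s _ => ?_)
          have : ∑ a, (dStat s * (π s a * (rπ s a + γ * ∑ s', Pπ s a s' * Vππ s'))
              - dStat s * π s a * Vπ'π' s
              - γ * ∑ s', dStat s * π s a * Pπ' s a s' * Δ s')
              = dStat s * Δ s
                - γ * ∑ a, ∑ s', dStat s * π s a * Pπ' s a s' * Δ s' := by
            rw [Finset.sum_sub_distrib, Finset.sum_sub_distrib,
              ← Finset.mul_sum, ← hVππ s, Finset.mul_sum]
            have hb : ∑ a, dStat s * π s a * Vπ'π' s = dStat s * Vπ'π' s := by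
              simp [← Finset.sum_mul, ← Finset.mul_sum, hπ_sum s]
            rw [hb]
            simp [hΔ]; ring
          rw [← this]
          exact Finset.sum_congr rfl (fun a _ => hinner s a)
      _ = (∑ s, dStat s * Δ s)
            - γ * ∑ s, ∑ a, ∑ s', dStat s * π s a * Pπ' s a s' * Δ s' := by
          rw [Finset.sum_sub_distrib, Finset.mul_sum]
      _ = (∑ s, dStat s * Δ s)
            - ∑ s', (dStat s' - (1 - γ) * ρ s') * Δ s' := by
          congr 1
          have hswap : ∑ s, ∑ a, ∑ s', dStat s * π s a * Pπ' s a s' * Δ s'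
              = ∑ s', (∑ s, ∑ a, dStat s * π s a * Pπ' s a s') * Δ s' := by
            calc ∑ s, ∑ a, ∑ s', dStat s * π s a * Pπ' s a s' * Δ s'
                = ∑ s, ∑ s', ∑ a, dStat s * π s a * Pπ' s a s' * Δ s' :=
                  Finset.sum_congr rfl (fun s _ => Finset.sum_comm)
              _ = ∑ s', ∑ s, ∑ a, dStat s * π s a * Pπ' s a s' * Δ s' :=
                  Finset.sum_comm
              _ = ∑ s', (∑ s, ∑ a, dStat s * π s a * Pπ' s a s') * Δ s' := by
                  refine Finset.sum_congr rfl (fun s' _ => ?_)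
                  rw [Finset.sum_mul]
                  exact Finset.sum_congr rfl (fun s _ => by rw [Finset.sum_mul])
          rw [hswap, Finset.mul_sum]
          refine Finset.sum_congr rfl (fun s' _ => ?_)
          have := hdStat s'
          have h3 : γ * ∑ s, ∑ a, dStat s * π s a * Pπ' s a s'
              = dStat s' - (1 - γ) * ρ s' := by linarith
          rw [← h3]; ring
      _ = (1 - γ) * ∑ s, ρ s * Δ s := by
          have : ∑ s, (dStat s - (1 - γ) * ρ s) * Δ s
              = (∑ s, dStat s * Δ s) - ∑ s, (1 - γ) * (ρ s * Δ s) := by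
            rw [← Finset.sum_sub_distrib]
            exact Finset.sum_congr rfl (fun _ _ => by ring)
          rw [this, ← Finset.mul_sum]; ring
  rw [hsum, ← mul_assoc, one_div, inv_mul_cancel₀ hne, one_mul,
    ← Finset.sum_sub_distrib]
  exact Finset.sum_congr rfl (fun _ _ => by simp [hΔ]; ring)
end
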